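/- Let e = uv be an edge of G, and set J = (uv) and K = I(G∖e). Let A = N(u)∖{v}, B = N(v)∖{u}, and H = G∖(N(u)∪N(v)). Then the minimal monomial generating set of J ∩ K is G(J ∩ K) = {uvw : w ∈ A∖B} ∪ {uvw : w ∈ B∖A} ∪ {uvw : w ∈ A∩B} ∪ {uv·m : m ∈ G(I(H))}, where G(I(H)) is the set of monomials x_i x_j over the edges {x_i,x_j} of H. -/

import Mathlib

open MvPolynomial

variable {V : Type*}

/-- The graph obtained from `G` by deleting the vertices in `S`
(and all edges incident to them). -/
def delVerts (G : SimpleGraph V) (S : Set V) : SimpleGraph V where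
  Adj x y := G.Adj x y ∧ x ∉ S ∧ y ∉ S
  symm := ⟨fun _ _ h => ⟨h.1.symm, h.2.2, h.2.1⟩⟩
  loopless := ⟨fun _ h => G.ne_of_adj h.1 rfl⟩

/-- The edge ideal of a simple graph `G`. -/
noncomputable def edgeIdeal (k : Type*) [Field k] (G : SimpleGraph V) :
    Ideal (MvPolynomial V k) :=
  Ideal.span {m | ∃ x y, G.Adj x y ∧ m = X x * X y}

/-- A (monic) monomial in a multivariate polynomial ring. -/
def IsMonomial {k : Type*} [Field k] (m : MvPolynomial V k) : Prop :=
  ∃ s : V →₀ ℕ, m = monomial s 1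

/-- The set of minimal (monic) monomial generators of a monomial ideal `I`:
monomials `m ∈ I` such that no proper monomial divisor of `m` lies in `I`. -/
def minGens {k : Type*} [Field k] (I : Ideal (MvPolynomial V k)) :
    Set (MvPolynomial V k) :=
  {m | IsMonomial m ∧ m ∈ I ∧
    ∀ m' : MvPolynomial V k, IsMonomial m' → m' ∣ m → m' ≠ m → m' ∉ I}

/- ### Auxiliary lemmas -/

lemma X_mul_X_eq {k : Type*} [Field k] (x y : V) :
    (X x * X y : MvPolynomial V k) = monomial (Finsupp.single x 1 + Finsupp.single y 1) 1 := by
  rw [X, X, monomial_mul, one_mul]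

lemma mem_edgeIdeal_monomial {k : Type*} [Field k] (G' : SimpleGraph V) (s : V →₀ ℕ) :
    monomial s (1:k) ∈ edgeIdeal k G' ↔
      ∃ x y, G'.Adj x y ∧ Finsupp.single x 1 + Finsupp.single y 1 ≤ s := by
  classical
  have hset : {m | ∃ x y, G'.Adj x y ∧ m = (X x * X y : MvPolynomial V k)} =
      (fun f => monomial f (1:k)) ''
        {f | ∃ x y, G'.Adj x y ∧ f = Finsupp.single x 1 + Finsupp.single y 1} := by
    ext m
    constructor
    · rintro ⟨x, y, h, rfl⟩
      exact ⟨_, ⟨x, y, h, rfl⟩, (X_mul_X_eq x y).symm⟩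
    · rintro ⟨f, ⟨x, y, h, rfl⟩, rfl⟩
      exact ⟨x, y, h, (X_mul_X_eq x y).symm⟩
  rw [edgeIdeal, hset, mem_ideal_span_monomial_image]
  constructor
  · intro h
    obtain ⟨si, ⟨x, y, hxy, rfl⟩, hle⟩ := h s (by classical simp [mem_support_iff, coeff_monomial])
    exact ⟨x, y, hxy, hle⟩
  · rintro ⟨x, y, hxy, hle⟩ xi hxi
    have : s = xi := by
      by_contra hne
      classical
      simp [mem_support_iff, coeff_monomial, hne] at hxi
    subst this
    exact ⟨_, ⟨x, y, hxy, rfl⟩, hle⟩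

lemma memI_iff {k : Type*} [Field k] (G : SimpleGraph V) (u v : V) (t : V →₀ ℕ) :
    (monomial t (1:k) ∈ Ideal.span {(X u * X v : MvPolynomial V k)} ⊓
        edgeIdeal k (G.deleteEdges {s(u, v)})) ↔
      (Finsupp.single u 1 + Finsupp.single v 1 ≤ t ∧
        ∃ x y, G.Adj x y ∧ ¬(s(x,y) = s(u,v)) ∧
          Finsupp.single x 1 + Finsupp.single y 1 ≤ t) := by
  rw [Submodule.mem_inf, Ideal.mem_span_singleton, X_mul_X_eq, monomial_dvd_monomial,
    mem_edgeIdeal_monomial]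
  simp [SimpleGraph.deleteEdges_adj, and_assoc]

lemma two_left {x y : V} {s : V →₀ ℕ} (hxy : x ≠ y)
    (h : Finsupp.single x 1 + Finsupp.single y 1 ≤ s) : 1 ≤ s x := by
  classical
  have := Finsupp.le_def.mp h x
  simpa [Finsupp.single_apply, Ne.symm hxy] using this

lemma two_right {x y : V} {s : V →₀ ℕ} (hxy : x ≠ y)
    (h : Finsupp.single x 1 + Finsupp.single y 1 ≤ s) : 1 ≤ s y := by
  classical
  have := Finsupp.le_def.mp h y
  simpa [Finsupp.single_apply, hxy] using this

lemma three_le {u v w : V} {s : V →₀ ℕ} (huv : u ≠ v) (huw : u ≠ w) (hvw : v ≠ w)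
    (h1 : 1 ≤ s u) (h2 : 1 ≤ s v) (h3 : 1 ≤ s w) :
    Finsupp.single u 1 + Finsupp.single v 1 + Finsupp.single w 1 ≤ s := by
  classical
  rw [Finsupp.le_def]
  intro a
  simp only [Finsupp.coe_add, Pi.add_apply, Finsupp.single_apply]
  rcases eq_or_ne u a with rfl | ha1
  · simpa [Ne.symm huv, Ne.symm huw] using h1
  · rcases eq_or_ne v a with rfl | ha2
    · simpa [huv, Ne.symm hvw] using h2
    · rcases eq_or_ne w a with rfl | ha3
      · simpa [huw, hvw] using h3
      · simp [ha1, ha2, ha3]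

lemma four_le {u v x y : V} {s : V →₀ ℕ} (huv : u ≠ v) (hux : u ≠ x) (huy : u ≠ y)
    (hvx : v ≠ x) (hvy : v ≠ y) (hxy : x ≠ y)
    (h1 : 1 ≤ s u) (h2 : 1 ≤ s v) (h3 : 1 ≤ s x) (h4 : 1 ≤ s y) :
    Finsupp.single u 1 + Finsupp.single v 1 + (Finsupp.single x 1 + Finsupp.single y 1) ≤ s := by
  classical
  rw [Finsupp.le_def]
  intro a
  simp only [Finsupp.coe_add, Pi.add_apply, Finsupp.single_apply]
  rcases eq_or_ne u a with rfl | ha1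
  · simpa [Ne.symm huv, Ne.symm hux, Ne.symm huy] using h1
  · rcases eq_or_ne v a with rfl | ha2
    · simpa [huv, Ne.symm hvx, Ne.symm hvy] using h2
    · rcases eq_or_ne x a with rfl | ha3
      · simpa [hux, hvx, Ne.symm hxy] using h3
      · rcases eq_or_ne y a with rfl | ha4
        · simpa [huy, hvy, hxy] using h4
        · simp [ha1, ha2, ha3, ha4]

lemma three_support {u v w c : V}
    (h : 1 ≤ (Finsupp.single u 1 + Finsupp.single v 1 + Finsupp.single w 1 : V →₀ ℕ) c) :
    c = u ∨ c = v ∨ c = w := by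
  classical
  by_contra h'
  push_neg at h'
  simp [Finsupp.single_apply, Ne.symm h'.1, Ne.symm h'.2.1, Ne.symm h'.2.2] at h

lemma four_support {u v x y c : V}
    (h : 1 ≤ (Finsupp.single u 1 + Finsupp.single v 1 +
      (Finsupp.single x 1 + Finsupp.single y 1) : V →₀ ℕ) c) :
    c = u ∨ c = v ∨ c = x ∨ c = y := by
  classical
  by_contra h'
  push_neg at h'
  simp [Finsupp.single_apply, Ne.symm h'.1, Ne.symm h'.2.1, Ne.symm h'.2.2.1,
    Ne.symm h'.2.2.2] at h

/-- with `e = uv ∈ E_G`, `J = (uv)`, `K = I(G \ e)`,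
`A = N(u) \ {v}`, `B = N(v) \ {u}` and `H = G \ (N(u) ∪ N(v))`, the minimal
generating set of `J ∩ K` is
`{uvw : w ∈ A \ B} ∪ {uvw : w ∈ B \ A} ∪ {uvw : w ∈ A ∩ B} ∪ {uv·m : m ∈ G(I(H))}`. -/
theorem stmt1 (k : Type*) [Field k] [Fintype V] [DecidableEq V]
    (G : SimpleGraph V) (u v : V) (huv : G.Adj u v) :
    minGens (Ideal.span {(X u * X v : MvPolynomial V k)} ⊓
        edgeIdeal k (G.deleteEdges {s(u, v)})) =
      ((fun w => (X u * X v * X w : MvPolynomial V k)) ''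
          ((G.neighborSet u \ {v}) \ (G.neighborSet v \ {u}))) ∪
      ((fun w => (X u * X v * X w : MvPolynomial V k)) ''
          ((G.neighborSet v \ {u}) \ (G.neighborSet u \ {v}))) ∪
      ((fun w => (X u * X v * X w : MvPolynomial V k)) ''
          ((G.neighborSet u \ {v}) ∩ (G.neighborSet v \ {u}))) ∪
      {m | ∃ x y, (delVerts G (G.neighborSet u ∪ G.neighborSet v)).Adj x y ∧
          m = (X u * X v * (X x * X y) : MvPolynomial V k)} := by
  classical
  have hne : u ≠ v := huv.ne
  ext m
  constructor
  · rintro ⟨⟨s, rfl⟩, hmI, hmin⟩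
    rw [memI_iff] at hmI
    obtain ⟨hJ, x0, y0, hxy0, hxyne0, hle0⟩ := hmI
    have hsu : 1 ≤ s u := two_left hne hJ
    have hsv : 1 ≤ s v := two_right hne hJ
    have key : ∀ t : V →₀ ℕ,
        monomial t (1:k) ∈ (Ideal.span {(X u * X v : MvPolynomial V k)} ⊓
          edgeIdeal k (G.deleteEdges {s(u, v)})) → t ≤ s → t = s := by
      intro t htI hts
      by_contra hts'
      exact hmin (monomial t 1) ⟨t, rfl⟩
        (monomial_dvd_monomial.mpr ⟨Or.inr hts, dvd_refl 1⟩)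
        (by simpa [monomial_left_inj (one_ne_zero (α := k))] using hts') htI
    by_cases hwEx : ∃ w, ((G.Adj u w ∧ w ≠ v) ∨ (G.Adj v w ∧ w ≠ u)) ∧ 1 ≤ s w
    · obtain ⟨w, hwAB, hsw⟩ := hwEx
      have hwu : w ≠ u := by rcases hwAB with ⟨h, _⟩ | ⟨h, h'⟩; exacts [h.ne', h']
      have hwv : w ≠ v := by rcases hwAB with ⟨h, h'⟩ | ⟨h, _⟩; exacts [h', h.ne']
      have hts : Finsupp.single u 1 + Finsupp.single v 1 + Finsupp.single w 1 ≤ s :=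
        three_le hne (Ne.symm hwu) (Ne.symm hwv) hsu hsv hsw
      have htI : monomial (Finsupp.single u 1 + Finsupp.single v 1 + Finsupp.single w 1) (1:k) ∈
          Ideal.span {(X u * X v : MvPolynomial V k)} ⊓
            edgeIdeal k (G.deleteEdges {s(u, v)}) := by
        rw [memI_iff]
        refine ⟨self_le_add_right _ _, ?_⟩
        rcases hwAB with ⟨h, h'⟩ | ⟨h, h'⟩
        · refine ⟨u, w, h, by simp [Sym2.eq_iff, h', hne], ?_⟩
          rw [show Finsupp.single u 1 + Finsupp.single v 1 + Finsupp.single w 1 =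
            Finsupp.single u 1 + Finsupp.single w 1 + Finsupp.single v 1 by abel]
          exact self_le_add_right _ _
        · refine ⟨v, w, h, by simp [Sym2.eq_iff, h', Ne.symm hne], ?_⟩
          rw [show Finsupp.single u 1 + Finsupp.single v 1 + Finsupp.single w 1 =
            Finsupp.single v 1 + Finsupp.single w 1 + Finsupp.single u 1 by abel]
          exact self_le_add_right _ _
      have hst := key _ htI hts
      subst hst
      have hm3 : (X u * X v * X w : MvPolynomial V k) =
          monomial (Finsupp.single u 1 + Finsupp.single v 1 + Finsupp.single w 1) 1 := by
        rw [X_mul_X_eq, X, monomial_mul, one_mul]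
      rw [← hm3]
      by_cases hA : G.Adj u w
      · by_cases hB : G.Adj v w
        · exact Set.mem_union_left _ (Set.mem_union_right _
            ⟨w, ⟨⟨hA, hwv⟩, hB, hwu⟩, rfl⟩)
        · refine Set.mem_union_left _ (Set.mem_union_left _ (Set.mem_union_left _
            ⟨w, ⟨⟨hA, hwv⟩, fun hB' => hB hB'.1⟩, rfl⟩))
      · have hB : G.Adj v w := by
          rcases hwAB with ⟨h, _⟩ | ⟨h, _⟩; exacts [absurd h hA, h]
        refine Set.mem_union_left _ (Set.mem_union_left _ (Set.mem_union_right _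
          ⟨w, ⟨⟨hB, hwu⟩, fun hA' => hA hA'.1⟩, rfl⟩))
    · have hsx : 1 ≤ s x0 := two_left hxy0.ne hle0
      have hsy : 1 ≤ s y0 := two_right hxy0.ne hle0
      have main : ∀ c d, G.Adj c d → ¬(s(c,d) = s(u,v)) → 1 ≤ s c → 1 ≤ s d →
          c ∉ G.neighborSet u ∪ G.neighborSet v := by
        intro c d hcd hnecd hsc hsd hc
        rcases hc with hc | hc
        · by_cases hcv : c = v
          · subst hcv
            have hdu : d ≠ u := by rintro rfl; exact hnecd Sym2.eq_swap
            exact hwEx ⟨d, Or.inr ⟨hcd, hdu⟩, hsd⟩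
          · exact hwEx ⟨c, Or.inl ⟨hc, hcv⟩, hsc⟩
        · by_cases hcu : c = u
          · subst hcu
            have hdv : d ≠ v := fun h => hnecd (by rw [h])
            exact hwEx ⟨d, Or.inl ⟨hcd, hdv⟩, hsd⟩
          · exact hwEx ⟨c, Or.inr ⟨hc, hcu⟩, hsc⟩
      have hxU : x0 ∉ G.neighborSet u ∪ G.neighborSet v := main x0 y0 hxy0 hxyne0 hsx hsy
      have hyU : y0 ∉ G.neighborSet u ∪ G.neighborSet v :=
        main y0 x0 hxy0.symm (by rw [Sym2.eq_swap]; exact hxyne0) hsy hsx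
      have hx_u : x0 ≠ u := by rintro rfl; exact hxU (Set.mem_union_right _ huv.symm)
      have hx_v : x0 ≠ v := by rintro rfl; exact hxU (Set.mem_union_left _ huv)
      have hy_u : y0 ≠ u := by rintro rfl; exact hyU (Set.mem_union_right _ huv.symm)
      have hy_v : y0 ≠ v := by rintro rfl; exact hyU (Set.mem_union_left _ huv)
      have hts : Finsupp.single u 1 + Finsupp.single v 1 +
          (Finsupp.single x0 1 + Finsupp.single y0 1) ≤ s :=
        four_le hne (Ne.symm hx_u) (Ne.symm hy_u) (Ne.symm hx_v) (Ne.symm hy_v)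
          hxy0.ne hsu hsv hsx hsy
      have htI : monomial (Finsupp.single u 1 + Finsupp.single v 1 +
          (Finsupp.single x0 1 + Finsupp.single y0 1)) (1:k) ∈
          Ideal.span {(X u * X v : MvPolynomial V k)} ⊓
            edgeIdeal k (G.deleteEdges {s(u, v)}) := by
        rw [memI_iff]
        exact ⟨self_le_add_right _ _, x0, y0, hxy0, hxyne0, self_le_add_left _ _⟩
      have hst := key _ htI hts
      subst hst
      have hm4 : (X u * X v * (X x0 * X y0) : MvPolynomial V k) =
          monomial (Finsupp.single u 1 + Finsupp.single v 1 +
            (Finsupp.single x0 1 + Finsupp.single y0 1)) 1 := by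
        rw [X_mul_X_eq u v, X_mul_X_eq x0 y0, monomial_mul, one_mul]
      exact Set.mem_union_right _ ⟨x0, y0, ⟨hxy0, hxU, hyU⟩, hm4.symm⟩
  · intro hm
    have genw : ∀ w, (G.Adj u w ∧ w ≠ v) ∨ (G.Adj v w ∧ w ≠ u) →
        (X u * X v * X w : MvPolynomial V k) ∈
          minGens (Ideal.span {(X u * X v : MvPolynomial V k)} ⊓
            edgeIdeal k (G.deleteEdges {s(u, v)})) := by
      intro w hwAB
      have hwu : w ≠ u := by rcases hwAB with ⟨h, _⟩ | ⟨h, h'⟩; exacts [h.ne', h']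
      have hwv : w ≠ v := by rcases hwAB with ⟨h, h'⟩ | ⟨h, _⟩; exacts [h', h.ne']
      have hm3 : (X u * X v * X w : MvPolynomial V k) =
          monomial (Finsupp.single u 1 + Finsupp.single v 1 + Finsupp.single w 1) 1 := by
        rw [X_mul_X_eq, X, monomial_mul, one_mul]
      rw [hm3]
      refine ⟨⟨_, rfl⟩, ?_, ?_⟩
      · rw [memI_iff]
        refine ⟨self_le_add_right _ _, ?_⟩
        rcases hwAB with ⟨h, h'⟩ | ⟨h, h'⟩
        · refine ⟨u, w, h, by simp [Sym2.eq_iff, h', hne], ?_⟩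
          rw [show Finsupp.single u 1 + Finsupp.single v 1 + Finsupp.single w 1 =
            Finsupp.single u 1 + Finsupp.single w 1 + Finsupp.single v 1 by abel]
          exact self_le_add_right _ _
        · refine ⟨v, w, h, by simp [Sym2.eq_iff, h', Ne.symm hne], ?_⟩
          rw [show Finsupp.single u 1 + Finsupp.single v 1 + Finsupp.single w 1 =
            Finsupp.single v 1 + Finsupp.single w 1 + Finsupp.single u 1 by abel]
          exact self_le_add_right _ _
      · rintro m' ⟨r, rfl⟩ hdvd hne' hmem
        have hrt : r ≤ Finsupp.single u 1 + Finsupp.single v 1 + Finsupp.single w 1 := by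
          rcases (monomial_dvd_monomial.mp hdvd).1 with h | h
          · exact absurd h one_ne_zero
          · exact h
        rw [memI_iff] at hmem
        obtain ⟨hr1, x, y, hxy, hxyne, hr2⟩ := hmem
        have hru : 1 ≤ r u := two_left hne hr1
        have hrv : 1 ≤ r v := two_right hne hr1
        have hrx : 1 ≤ r x := two_left hxy.ne hr2
        have hry : 1 ≤ r y := two_right hxy.ne hr2
        have hx3 := three_support (le_trans hrx (Finsupp.le_def.mp hrt x))
        have hy3 := three_support (le_trans hry (Finsupp.le_def.mp hrt y))
        have hrw : 1 ≤ r w := by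
          rcases hx3 with rfl | rfl | rfl
          · rcases hy3 with rfl | rfl | rfl
            · exact absurd rfl hxy.ne
            · exact absurd rfl hxyne
            · exact hry
          · rcases hy3 with rfl | rfl | rfl
            · exact absurd Sym2.eq_swap hxyne
            · exact absurd rfl hxy.ne
            · exact hry
          · exact hrx
        exact hne' (by rw [le_antisymm hrt
          (three_le hne (Ne.symm hwu) (Ne.symm hwv) hru hrv hrw)])
    rcases hm with ((⟨w, hw, rfl⟩ | ⟨w, hw, rfl⟩) | ⟨w, hw, rfl⟩) | ⟨x, y, hxy, rfl⟩
    · exact genw w (Or.inl ⟨hw.1.1, hw.1.2⟩)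
    · exact genw w (Or.inr ⟨hw.1.1, hw.1.2⟩)
    · exact genw w (Or.inl ⟨hw.1.1, hw.1.2⟩)
    · obtain ⟨hadj, hxU, hyU⟩ := hxy
      have hx_u : x ≠ u := by rintro rfl; exact hxU (Set.mem_union_right _ huv.symm)
      have hx_v : x ≠ v := by rintro rfl; exact hxU (Set.mem_union_left _ huv)
      have hy_u : y ≠ u := by rintro rfl; exact hyU (Set.mem_union_right _ huv.symm)
      have hy_v : y ≠ v := by rintro rfl; exact hyU (Set.mem_union_left _ huv)
      have hxyne : ¬(s(x, y) = s(u, v)) := by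
        simp [Sym2.eq_iff, hx_u, hx_v, hy_u, hy_v]
      have hm4 : (X u * X v * (X x * X y) : MvPolynomial V k) =
          monomial (Finsupp.single u 1 + Finsupp.single v 1 +
            (Finsupp.single x 1 + Finsupp.single y 1)) 1 := by
        rw [X_mul_X_eq u v, X_mul_X_eq x y, monomial_mul, one_mul]
      rw [hm4]
      refine ⟨⟨_, rfl⟩, ?_, ?_⟩
      · rw [memI_iff]
        exact ⟨self_le_add_right _ _, x, y, hadj, hxyne, self_le_add_left _ _⟩
      · rintro m' ⟨r, rfl⟩ hdvd hne' hmem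
        have hrt : r ≤ Finsupp.single u 1 + Finsupp.single v 1 +
            (Finsupp.single x 1 + Finsupp.single y 1) := by
          rcases (monomial_dvd_monomial.mp hdvd).1 with h | h
          · exact absurd h one_ne_zero
          · exact h
        rw [memI_iff] at hmem
        obtain ⟨hr1, a, b, hab, habne, hr2⟩ := hmem
        have hru : 1 ≤ r u := two_left hne hr1
        have hrv : 1 ≤ r v := two_right hne hr1
        have hra : 1 ≤ r a := two_left hab.ne hr2
        have hrb : 1 ≤ r b := two_right hab.ne hr2
        have ha4 := four_support (le_trans hra (Finsupp.le_def.mp hrt a))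
        have hb4 := four_support (le_trans hrb (Finsupp.le_def.mp hrt b))
        have hnuv : ∀ c d, G.Adj c d → ¬(s(c, d) = s(u, v)) →
            (d = u ∨ d = v ∨ d = x ∨ d = y) → c ≠ u := by
          rintro c d hcd hnecd hd4 rfl
          rcases hd4 with rfl | rfl | rfl | rfl
          · exact hcd.ne rfl
          · exact hnecd rfl
          · exact hxU (Set.mem_union_left _ hcd)
          · exact hyU (Set.mem_union_left _ hcd)
        have hnuv' : ∀ c d, G.Adj c d → ¬(s(c, d) = s(u, v)) →
            (d = u ∨ d = v ∨ d = x ∨ d = y) → c ≠ v := by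
          rintro c d hcd hnecd hd4 rfl
          rcases hd4 with rfl | rfl | rfl | rfl
          · exact hnecd Sym2.eq_swap
          · exact hcd.ne rfl
          · exact hxU (Set.mem_union_right _ hcd)
          · exact hyU (Set.mem_union_right _ hcd)
        have habne' : ¬(s(b, a) = s(u, v)) := by rw [Sym2.eq_swap]; exact habne
        have hau : a ≠ u := hnuv a b hab habne hb4
        have hav : a ≠ v := hnuv' a b hab habne hb4
        have hbu : b ≠ u := hnuv b a hab.symm habne' ha4
        have hbv : b ≠ v := hnuv' b a hab.symm habne' ha4
        have hrx : 1 ≤ r x ∧ 1 ≤ r y := by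
          rcases ha4 with rfl | rfl | rfl | rfl
          · exact absurd rfl hau
          · exact absurd rfl hav
          · rcases hb4 with rfl | rfl | rfl | rfl
            · exact absurd rfl hbu
            · exact absurd rfl hbv
            · exact absurd rfl hab.ne
            · exact ⟨hra, hrb⟩
          · rcases hb4 with rfl | rfl | rfl | rfl
            · exact absurd rfl hbu
            · exact absurd rfl hbv
            · exact ⟨hrb, hra⟩
            · exact absurd rfl hab.ne
        exact hne' (by rw [le_antisymm hrt
          (four_le hne (Ne.symm hx_u) (Ne.symm hy_u) (Ne.symm hx_v) (Ne.symm hy_v)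
            hadj.ne hru hrv hrx.1 hrx.2)])
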